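/- For any finite unordered rooted tree τ, the DAG reduction R(τ) has at least H(τ)+1 vertices, and it has exactly H(τ)+1 vertices if and only if τ is self-nested. -/

import Mathlib

/-- A finite rooted tree whose vertices form a finite subset `supp` of `ℕ`.
`par` maps each vertex to its parent; the root is a fixed point of `par`
(so it has no parent), and every vertex reaches the root by iterating `par`
(connectedness / acyclicity). -/
structure FTree where
  supp : Finset ℕ
  root : ℕ
  root_mem : root ∈ supp
  par : ℕ → ℕ
  par_mem : ∀ v ∈ supp, par v ∈ supp
  par_root : par root = root
  reach : ∀ v ∈ supp, ∃ n, par^[n] v = root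

namespace FTree

/-- Depth of a vertex: least number of parent steps needed to reach the root. -/
noncomputable def depth (t : FTree) (v : ℕ) : ℕ :=
  if h : v ∈ t.supp then Nat.find (t.reach v h) else 0

/-- `w` is a (weak) descendant of `v` in `t`. -/
def IsDesc (t : FTree) (v w : ℕ) : Prop :=
  w ∈ t.supp ∧ ∃ n ≤ t.depth w, t.par^[n] w = v

open Classical in
/-- Vertex set of the subtree `t[v]` rooted at `v`. -/
noncomputable def desc (t : FTree) (v : ℕ) : Finset ℕ :=
  t.supp.filter (fun w => t.IsDesc v w)

/-- Height of the subtree `t[v]` rooted at `v`. -/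
noncomputable def heightAt (t : FTree) (v : ℕ) : ℕ :=
  (t.desc v).sup (fun w => t.depth w) - t.depth v

/-- Height of the tree. -/
noncomputable def height (t : FTree) : ℕ := t.heightAt t.root

/-- The set of children of `v` in `t`. -/
def children (t : FTree) (v : ℕ) : Finset ℕ :=
  t.supp.filter (fun w => t.par w = v ∧ w ≠ t.root)

open Classical in
/-- `γ_h(v)`: number of children of `v` whose subtree has height `h`. -/
noncomputable def gam (t : FTree) (v h : ℕ) : ℕ :=
  ((t.children v).filter (fun c => t.heightAt c = h)).card

/-- The subtree of `t` rooted at `v` is isomorphic (as an unordered rooted tree)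
to the subtree of `s` rooted at `w`: a bijection between the vertex sets sending
root to root and commuting with the parent maps (i.e. mapping edges to edges). -/
def SubtreeIso (t : FTree) (v : ℕ) (s : FTree) (w : ℕ) : Prop :=
  ∃ φ : ℕ → ℕ, Set.BijOn φ (t.desc v : Set ℕ) (s.desc w : Set ℕ) ∧ φ v = w ∧
    ∀ x ∈ t.desc v, x ≠ v → φ (t.par x) = s.par (φ x)

/-- Isomorphism of rooted trees. -/
def TreeIso (t s : FTree) : Prop := SubtreeIso t t.root s s.root

/-- A tree is self-nested if any two of its subtrees of the same height
are isomorphic. -/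
def SelfNested (t : FTree) : Prop :=
  ∀ v ∈ t.supp, ∀ w ∈ t.supp, t.heightAt v = t.heightAt w → SubtreeIso t v t w

open Classical in
/-- Height profile entry `ρ_t(h1,h2)`: the multiset (family up to permutation) of
the values `γ_{h2}(v)` over all vertices `v` of `t` with `H(t[v]) = h1`. -/
noncomputable def profile (t : FTree) (h1 h2 : ℕ) : Multiset ℕ :=
  (t.supp.filter (fun v => t.heightAt v = h1)).val.map (fun v => t.gam v h2)

/-- Number of vertices of `t`. -/
def numV (t : FTree) : ℕ := t.supp.card

/-- `a` is a (weak) ancestor of `b`. -/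
def IsAnc (t : FTree) (a b : ℕ) : Prop := ∃ n, t.par^[n] b = a

/-- `a` is a proper ancestor of `b`. -/
def ProperAnc (t : FTree) (a b : ℕ) : Prop := a ≠ b ∧ t.IsAnc a b

/-- `l` is the least common ancestor of `a` and `b`. -/
def IsLCA (t : FTree) (a b l : ℕ) : Prop :=
  l ∈ t.supp ∧ t.IsAnc l a ∧ t.IsAnc l b ∧
    ∀ m ∈ t.supp, t.IsAnc m a → t.IsAnc m b → t.IsAnc m l

/-- `φ`, restricted to the domain `D ⊆ t.supp`, is a constrained mapping in the
sense of Zhang from `t` to `s`: a one-to-one correspondence preserving the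
ancestor order, satisfying moreover Zhang's condition on least common ancestors. -/
def ZhangMapping (t s : FTree) (D : Finset ℕ) (φ : ℕ → ℕ) : Prop :=
  D ⊆ t.supp ∧ (∀ x ∈ D, φ x ∈ s.supp) ∧ Set.InjOn φ (D : Set ℕ) ∧
  (∀ a ∈ D, ∀ b ∈ D, (t.ProperAnc a b ↔ s.ProperAnc (φ a) (φ b))) ∧
  (∀ v1 ∈ D, ∀ v2 ∈ D, ∀ v3 ∈ D, ∀ l l',
    t.IsLCA v1 v2 l → s.IsLCA (φ v1) (φ v2) l' →
    (t.ProperAnc l v3 ↔ s.ProperAnc l' (φ v3)))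

/-- Allowed inserting operation (AI): adding a new internal vertex `w` as a child of
`v`, making `w` the parent of the child `c` of `v`; allowed only if
`H(t[c]) + 1 < H(t[v])`. -/
def InsertAI (t θ : FTree) : Prop :=
  ∃ v c w, v ∈ t.supp ∧ c ∈ t.children v ∧ w ∉ t.supp ∧
    t.heightAt c + 1 < t.heightAt v ∧
    θ.supp = insert w t.supp ∧ θ.root = t.root ∧
    θ.par w = v ∧ θ.par c = w ∧ ∀ x ∈ t.supp, x ≠ c → θ.par x = t.par x

/-- Allowed inserting operation (AS): attaching a tree `s` as a new child subtree of
`v`; allowed only if `H(s) + 1 ≤ H(t[v])`. -/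
def InsertAS (t θ : FTree) : Prop :=
  ∃ (v : ℕ) (s : FTree), v ∈ t.supp ∧ Disjoint s.supp t.supp ∧
    s.height + 1 ≤ t.heightAt v ∧
    θ.supp = t.supp ∪ s.supp ∧ θ.root = t.root ∧ θ.par s.root = v ∧
    (∀ x ∈ t.supp, θ.par x = t.par x) ∧ (∀ x ∈ s.supp, x ≠ s.root → θ.par x = s.par x)

/-- One allowed inserting operation. -/
def InsertStep (t θ : FTree) : Prop := InsertAI t θ ∨ InsertAS t θ

/-- Allowed deleting operation (DI): deleting an internal vertex `v`, child of `u`,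
having a unique child `c` (which becomes a child of `u`); allowed only if `u` has
another child `v'` with `H(t[v']) ≥ H(t[v])`. -/
def DeleteDI (t θ : FTree) : Prop :=
  ∃ u v c, v ∈ t.children u ∧ t.children v = {c} ∧
    (∃ v' ∈ t.children u, v' ≠ v ∧ t.heightAt v ≤ t.heightAt v') ∧
    θ.supp = t.supp.erase v ∧ θ.root = t.root ∧ θ.par c = u ∧
    ∀ x ∈ t.supp, x ≠ v → x ≠ c → θ.par x = t.par x

/-- Allowed deleting operation (DS): deleting the whole subtree rooted at a child `w`
of `v`; allowed only if `v` has another child `w'` with `H(t[w']) + 1 = H(t[v])`. -/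
def DeleteDS (t θ : FTree) : Prop :=
  ∃ v w, w ∈ t.children v ∧
    (∃ w' ∈ t.children v, w' ≠ w ∧ t.heightAt w' + 1 = t.heightAt v) ∧
    θ.supp = t.supp \ t.desc w ∧ θ.root = t.root ∧
    ∀ x ∈ θ.supp, θ.par x = t.par x

/-- One allowed deleting operation. -/
def DeleteStep (t θ : FTree) : Prop := DeleteDI t θ ∨ DeleteDS t θ

/-- A general single-vertex inserting operation: a new vertex `w` is added as a child
of `v`, and the vertices of a subset `C` of the children of `v` become children of `w`. -/
def GeneralInsert (t θ : FTree) : Prop :=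
  ∃ (v w : ℕ) (C : Finset ℕ), v ∈ t.supp ∧ w ∉ t.supp ∧ C ⊆ t.children v ∧
    θ.supp = insert w t.supp ∧ θ.root = t.root ∧ θ.par w = v ∧
    (∀ x ∈ C, θ.par x = w) ∧ ∀ x ∈ t.supp, x ∉ C → θ.par x = t.par x

/-- Cost of a constrained mapping with domain `D`: vertices of `t` not in the domain
are deleted, vertices of `s` not in the image are inserted (unit costs). -/
def mappingCost (t s : FTree) (D : Finset ℕ) (φ : ℕ → ℕ) : ℕ :=
  (t.numV - D.card) + (s.numV - (D.image φ).card)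

/-- Zhang's constrained edit distance between unordered trees: the minimal cost
associated with a constrained mapping between `t` and `s`. -/
noncomputable def DZ (t s : FTree) : ℕ :=
  sInf { c | ∃ (D : Finset ℕ) (φ : ℕ → ℕ), ZhangMapping t s D φ ∧ c = mappingCost t s D φ }

end FTree


namespace FTree

variable {t s : FTree} {v w x c : ℕ}

lemma depth_root (t : FTree) : t.depth t.root = 0 := by
  unfold depth
  rw [dif_pos t.root_mem]
  simp [Nat.find_eq_zero]

lemma depth_spec (hv : v ∈ t.supp) : t.par^[t.depth v] v = t.root := by
  unfold depth
  rw [dif_pos hv]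
  exact Nat.find_spec (t.reach v hv)

lemma depth_le (hv : v ∈ t.supp) {n : ℕ} (h : t.par^[n] v = t.root) : t.depth v ≤ n := by
  unfold depth
  rw [dif_pos hv]
  exact Nat.find_le h

lemma depth_min (hv : v ∈ t.supp) {m : ℕ} (hm : m < t.depth v) : t.par^[m] v ≠ t.root := by
  unfold depth at hm
  rw [dif_pos hv] at hm
  exact Nat.find_min (t.reach v hv) hm

lemma ne_root_of_depth_pos (hv : v ∈ t.supp) (h : 0 < t.depth v) : v ≠ t.root := by
  have := t.depth_min hv h
  simpa using this

lemma depth_pos_of_ne_root (hv : v ∈ t.supp) (h : v ≠ t.root) : 0 < t.depth v := by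
  rcases Nat.eq_zero_or_pos (t.depth v) with h0 | h0
  · exfalso
    have := t.depth_spec hv
    rw [h0] at this
    simp at this
    exact h this
  · exact h0

lemma depth_par (hv : v ∈ t.supp) (hvr : v ≠ t.root) :
    t.depth v = t.depth (t.par v) + 1 := by
  have hp : t.par v ∈ t.supp := t.par_mem v hv
  have hpos : 0 < t.depth v := t.depth_pos_of_ne_root hv hvr
  have h1 : t.par^[t.depth v] v = t.root := t.depth_spec hv
  have h2 : t.par^[t.depth v - 1] (t.par v) = t.root := by
    rw [← Function.iterate_succ_apply]
    have : (t.depth v - 1) + 1 = t.depth v := by omega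
    rw [Nat.succ_eq_add_one, this]
    exact h1
  have h3 : t.depth (t.par v) ≤ t.depth v - 1 := t.depth_le hp h2
  have h4 : t.par^[t.depth (t.par v) + 1] v = t.root := by
    rw [Function.iterate_succ_apply]
    exact t.depth_spec hp
  have h5 : t.depth v ≤ t.depth (t.par v) + 1 := t.depth_le hv h4
  omega

lemma iterate_facts (hv : v ∈ t.supp) :
    ∀ n, n ≤ t.depth v → t.par^[n] v ∈ t.supp ∧ t.depth (t.par^[n] v) = t.depth v - n := by
  intro n
  induction n with
  | zero => intro _; simpa using hv
  | succ n ih =>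
    intro h
    obtain ⟨hm, hd⟩ := ih (by omega)
    have hne : t.par^[n] v ≠ t.root := by
      apply t.ne_root_of_depth_pos hm
      omega
    rw [Function.iterate_succ_apply']
    have := t.depth_par hm hne
    exact ⟨t.par_mem _ hm, by omega⟩

lemma mem_desc : x ∈ t.desc v ↔ t.IsDesc v x := by
  classical
  unfold desc
  simp only [Finset.mem_filter]
  constructor
  · exact fun h => h.2
  · exact fun h => ⟨h.1, h⟩

lemma desc_subset_supp (t : FTree) (v : ℕ) : t.desc v ⊆ t.supp :=
  fun _ hx => (mem_desc.mp hx).1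

lemma desc_facts (hx : x ∈ t.desc v) :
    x ∈ t.supp ∧ v ∈ t.supp ∧ t.depth v ≤ t.depth x ∧
      t.par^[t.depth x - t.depth v] x = v := by
  obtain ⟨hxs, n, hn, hnv⟩ := mem_desc.mp hx
  obtain ⟨hmem, hdep⟩ := t.iterate_facts hxs n hn
  rw [hnv] at hmem hdep
  have hn' : t.depth x - t.depth v = n := by omega
  refine ⟨hxs, hmem, by omega, ?_⟩
  rw [hn', hnv]

lemma self_mem_desc (hv : v ∈ t.supp) : v ∈ t.desc v :=
  mem_desc.mpr ⟨hv, 0, Nat.zero_le _, rfl⟩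

lemma eq_of_depth_eq (hx : x ∈ t.desc v) (h : t.depth x = t.depth v) : x = v := by
  have h4 := (t.desc_facts hx).2.2.2
  rw [h] at h4
  simpa using h4

lemma par_mem_desc (hx : x ∈ t.desc v) (hxv : x ≠ v) :
    t.par x ∈ t.desc v ∧ t.depth x = t.depth (t.par x) + 1 := by
  obtain ⟨hxs, hvs, hle, hit⟩ := t.desc_facts hx
  set n := t.depth x - t.depth v with hn
  have hnpos : 0 < n := by
    rcases Nat.eq_zero_or_pos n with h0 | h0
    · exfalso; exact hxv (t.eq_of_depth_eq hx (by omega))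
    · exact h0
  have hxr : x ≠ t.root := by
    intro hr
    have : t.depth x = 0 := by rw [hr]; exact t.depth_root
    omega
  have hdp := t.depth_par hxs hxr
  have hit' : t.par^[n-1] (t.par x) = v := by
    rw [← Function.iterate_succ_apply]
    have : (n - 1) + 1 = n := by omega
    rw [Nat.succ_eq_add_one, this]; exact hit
  refine ⟨mem_desc.mpr ⟨t.par_mem x hxs, n - 1, by omega, hit'⟩, hdp⟩

lemma desc_trans (hc : c ∈ t.desc v) : t.desc c ⊆ t.desc v := by
  intro y hy
  obtain ⟨hys, hcs, hcy, hity⟩ := t.desc_facts hy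
  obtain ⟨_, hvs, hvc, hitc⟩ := t.desc_facts hc
  refine mem_desc.mpr ⟨hys, (t.depth c - t.depth v) + (t.depth y - t.depth c), by omega, ?_⟩
  rw [Function.iterate_add_apply, hity, hitc]

lemma desc_root (t : FTree) : t.desc t.root = t.supp := by
  apply Finset.Subset.antisymm (t.desc_subset_supp _)
  intro x hx
  exact mem_desc.mpr ⟨hx, t.depth x, le_refl _, t.depth_spec hx⟩

lemma heightAt_def (t : FTree) (v : ℕ) :
    t.heightAt v = (t.desc v).sup t.depth - t.depth v := rfl

lemma le_sup_depth (hv : v ∈ t.supp) : t.depth v ≤ (t.desc v).sup t.depth :=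
  Finset.le_sup (t.self_mem_desc hv)

lemma sup_eq (hv : v ∈ t.supp) : (t.desc v).sup t.depth = t.depth v + t.heightAt v := by
  have := t.le_sup_depth hv
  rw [t.heightAt_def]
  omega

lemma heightAt_le_height (hv : v ∈ t.supp) : t.heightAt v ≤ t.height := by
  have h1 : (t.desc v).sup t.depth ≤ (t.desc t.root).sup t.depth := by
    apply Finset.sup_mono
    rw [t.desc_root]
    exact t.desc_subset_supp v
  have h2 := t.le_sup_depth hv
  unfold height
  rw [t.heightAt_def, t.heightAt_def, t.depth_root]
  omega

lemma exists_heightAt {h : ℕ} (hh : h ≤ t.height) : ∃ v ∈ t.supp, t.heightAt v = h := by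
  have key : ∀ n, ∀ v ∈ t.supp, t.heightAt v = n → ∀ h ≤ n, ∃ x ∈ t.supp, t.heightAt x = h := by
    intro n
    induction n using Nat.strong_induction_on with
    | _ n ih =>
      intro v hv hn h hle
      rcases eq_or_lt_of_le hle with heq | hlt
      · exact ⟨v, hv, by omega⟩
      · have hnpos : 0 < n := by omega
        -- find deepest descendant
        have hne : (t.desc v).Nonempty := ⟨v, t.self_mem_desc hv⟩
        obtain ⟨x, hx, hxd⟩ := Finset.exists_mem_eq_sup (t.desc v) hne t.depth
        rw [t.sup_eq hv, hn] at hxd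
        have hxs : x ∈ t.supp := t.desc_subset_supp v hx
        have hxv := (t.desc_facts hx).2.2.2
        have hdiff : t.depth x - t.depth v = n := by omega
        set c := t.par^[n-1] x with hc
        obtain ⟨hcs, hcd⟩ := t.iterate_facts hxs (n-1) (by omega)
        rw [← hc] at hcs hcd
        have hcdv : t.depth c = t.depth v + 1 := by omega
        have hxc : x ∈ t.desc c := mem_desc.mpr ⟨hxs, n-1, by omega, rfl⟩
        have hcv : c ∈ t.desc v := by
          refine mem_desc.mpr ⟨hcs, 1, by omega, ?_⟩
          show t.par^[1] c = v
          rw [hc, ← Function.iterate_add_apply]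
          have h1n : 1 + (n - 1) = n := by omega
          rw [hdiff] at hxv
          rw [h1n]
          exact hxv
        have hge : t.depth v + n ≤ (t.desc c).sup t.depth := by
          calc t.depth v + n = t.depth x := by omega
          _ ≤ _ := Finset.le_sup hxc
        have hlesup : (t.desc c).sup t.depth ≤ t.depth v + n := by
          have hmono : (t.desc c).sup t.depth ≤ (t.desc v).sup t.depth :=
            Finset.sup_mono (t.desc_trans hcv)
          rw [t.sup_eq hv, hn] at hmono
          exact hmono
        have hhc : t.heightAt c = n - 1 := by
          have := t.sup_eq hcs
          omega
        exact ih (n-1) (by omega) c hcs hhc h (by omega)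
  exact key t.height t.root t.root_mem rfl h hh

lemma iso_refl (t : FTree) (v : ℕ) : SubtreeIso t v t v :=
  ⟨id, Set.bijOn_id _, rfl, fun _ _ _ => rfl⟩

lemma iso_symm (hv : v ∈ t.supp) (h : SubtreeIso t v s w) : SubtreeIso s w t v := by
  obtain ⟨φ, hbij, hroot, hpar⟩ := h
  set ψ := Function.invFunOn φ (t.desc v) with hψ
  have hinv : Set.InvOn ψ φ (t.desc v) (s.desc w) := hbij.invOn_invFunOn
  have hbij' : Set.BijOn ψ (s.desc w) (t.desc v) := Set.BijOn.symm hinv.symm hbij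
  have hvmem : (v : ℕ) ∈ (t.desc v : Set ℕ) := by
    simpa using t.self_mem_desc hv
  refine ⟨ψ, hbij', ?_, ?_⟩
  · rw [← hroot]
    exact hinv.1 hvmem
  · intro y hy hyw
    have hy' : (y : ℕ) ∈ (s.desc w : Set ℕ) := by simpa using hy
    have hx : ψ y ∈ (t.desc v : Set ℕ) := hbij'.mapsTo hy'
    have hφx : φ (ψ y) = y := hinv.2 hy'
    have hxv : ψ y ≠ v := by
      intro hc
      rw [hc, hroot] at hφx
      exact hyw hφx.symm
    have hxd : ψ y ∈ t.desc v := by simpa using hx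
    have hpx : t.par (ψ y) ∈ t.desc v := (t.par_mem_desc hxd hxv).1
    have := hpar (ψ y) hxd hxv
    rw [hφx] at this
    rw [← this]
    exact hinv.1 (by simpa using hpx)

lemma iso_trans {u : ℕ} (hv : v ∈ t.supp) (h1 : SubtreeIso t v t w)
    (h2 : SubtreeIso t w t u) : SubtreeIso t v t u := by
  obtain ⟨φ, hbφ, hrφ, hpφ⟩ := h1
  obtain ⟨ψ, hbψ, hrψ, hpψ⟩ := h2
  refine ⟨ψ ∘ φ, hbψ.comp hbφ, by simp [hrφ, hrψ], ?_⟩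
  intro x hx hxv
  have hφx : φ x ∈ (t.desc w : Set ℕ) := hbφ.mapsTo (by simpa using hx)
  have hφxw : φ x ≠ w := by
    intro hc
    have hvm : (v : ℕ) ∈ (t.desc v : Set ℕ) := by simpa using t.self_mem_desc hv
    have : x = v := hbφ.injOn (by simpa using hx) hvm (by rw [hc, hrφ])
    exact hxv this
  have e1 : φ (t.par x) = t.par (φ x) := hpφ x hx hxv
  have e2 : ψ (t.par (φ x)) = t.par (ψ (φ x)) := hpψ (φ x) (by simpa using hφx) hφxw
  simp only [Function.comp_apply]
  rw [e1, e2]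

lemma iso_depth (hv : v ∈ t.supp) {φ : ℕ → ℕ}
    (hbij : Set.BijOn φ (t.desc v : Set ℕ) (t.desc w : Set ℕ)) (hroot : φ v = w)
    (hpar : ∀ x ∈ t.desc v, x ≠ v → φ (t.par x) = t.par (φ x)) :
    ∀ x ∈ t.desc v, t.depth (φ x) + t.depth v = t.depth x + t.depth w := by
  have key : ∀ n, ∀ x ∈ t.desc v, t.depth x = t.depth v + n →
      t.depth (φ x) = t.depth w + n := by
    intro n
    induction n with
    | zero =>
      intro x hx hd
      have : x = v := t.eq_of_depth_eq hx (by omega)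
      rw [this, hroot]
      omega
    | succ n ih =>
      intro x hx hd
      have hxv : x ≠ v := by
        intro hc; rw [hc] at hd; omega
      obtain ⟨hpd, hdp⟩ := t.par_mem_desc hx hxv
      have ihp := ih (t.par x) hpd (by omega)
      have e1 := hpar x hx hxv
      have hφx : φ x ∈ t.desc w := by
        have := hbij.mapsTo (by simpa using hx)
        simpa using this
      have hφxw : φ x ≠ w := by
        intro hc
        have hvm : (v : ℕ) ∈ (t.desc v : Set ℕ) := by simpa using t.self_mem_desc hv
        have : x = v := hbij.injOn (by simpa using hx) hvm (by rw [hc, hroot])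
        exact hxv this
      obtain ⟨_, hd2⟩ := t.par_mem_desc hφx hφxw
      rw [e1] at ihp
      omega
  intro x hx
  have hle := (t.desc_facts hx).2.2.1
  have := key (t.depth x - t.depth v) x hx (by omega)
  omega

lemma sup_le_of_iso (hv : v ∈ t.supp) (hw : w ∈ t.supp) (h : SubtreeIso t v t w) :
    t.heightAt w ≤ t.heightAt v := by
  obtain ⟨φ, hbij, hroot, hpar⟩ := h
  have key := t.iso_depth hv hbij hroot hpar
  have hsw : (t.desc w).sup t.depth ≤ t.depth w + t.heightAt v := by
    apply Finset.sup_le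
    intro y hy
    obtain ⟨x, hx, rfl⟩ := hbij.surjOn (by simpa using hy)
    have hx' : x ∈ t.desc v := by simpa using hx
    have h1 := key x hx'
    have h2 : t.depth x ≤ (t.desc v).sup t.depth := Finset.le_sup hx'
    rw [t.sup_eq hv] at h2
    omega
  have := t.sup_eq hw
  omega

lemma heightAt_eq_of_iso (hv : v ∈ t.supp) (hw : w ∈ t.supp)
    (h : SubtreeIso t v t w) : t.heightAt v = t.heightAt w :=
  le_antisymm (t.sup_le_of_iso hw hv (t.iso_symm hv h)) (t.sup_le_of_iso hv hw h)

end FTree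

/-- The DAG reduction of `t` has at least `H(t) + 1` vertices, with
equality if and only if `t` is self-nested. The vertices of the DAG reduction are the
isomorphism classes of subtrees of `t`, represented here by any list `L` of vertices of `t`
whose rooted subtrees are pairwise non-isomorphic and such that every subtree of `t` is
isomorphic to one rooted in `L`; the number of vertices of the DAG reduction is then the
length of `L`. -/
theorem dag_card_ge_height_succ (t : FTree) (L : List ℕ)
    (hmem : ∀ x ∈ L, x ∈ t.supp)
    (hpair : L.Pairwise fun a b => ¬ FTree.SubtreeIso t a t b)
    (hcover : ∀ v ∈ t.supp, ∃ x ∈ L, FTree.SubtreeIso t v t x) :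
    t.height + 1 ≤ L.length ∧ (L.length = t.height + 1 ↔ t.SelfNested) := by
  classical
  -- pairwise non-iso in both directions
  have hpair2 : L.Pairwise fun a b =>
      ¬ FTree.SubtreeIso t a t b ∧ ¬ FTree.SubtreeIso t b t a := by
    refine hpair.imp_of_mem ?_
    intro a b ha hb h
    exact ⟨h, fun hiso => h (t.iso_symm (hmem b hb) hiso)⟩
  have hforall : ∀ a ∈ L, ∀ b ∈ L, a ≠ b → ¬ FTree.SubtreeIso t a t b := by
    intro a ha b hb hab
    have hsym : Symmetric fun a b =>
        ¬ FTree.SubtreeIso t a t b ∧ ¬ FTree.SubtreeIso t b t a :=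
      fun _ _ h => ⟨h.2, h.1⟩
    haveI : Std.Symm fun a b =>
        ¬ FTree.SubtreeIso t a t b ∧ ¬ FTree.SubtreeIso t b t a := ⟨fun _ _ h => hsym h⟩
    exact (hpair2.forall ha hb hab).1
  have hnodup : L.Nodup := by
    refine hpair.imp ?_
    intro a b h hab
    exact h (hab ▸ FTree.iso_refl t a)
  set F := L.toFinset with hF
  have hcard : F.card = L.length := List.toFinset_card_of_nodup hnodup
  have hsub : F.image t.heightAt ⊆ Finset.range (t.height + 1) := by
    intro h hh
    obtain ⟨x, hx, rfl⟩ := Finset.mem_image.mp hh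
    rw [Finset.mem_range]
    have : x ∈ L := List.mem_toFinset.mp hx
    have := t.heightAt_le_height (hmem x this)
    omega
  have hsup : Finset.range (t.height + 1) ⊆ F.image t.heightAt := by
    intro h hh
    rw [Finset.mem_range] at hh
    obtain ⟨v, hv, hvh⟩ := t.exists_heightAt (h := h) (by omega)
    obtain ⟨x, hxL, hiso⟩ := hcover v hv
    refine Finset.mem_image.mpr ⟨x, List.mem_toFinset.mpr hxL, ?_⟩
    rw [← t.heightAt_eq_of_iso hv (hmem x hxL) hiso, hvh]
  have part1 : t.height + 1 ≤ L.length := by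
    calc t.height + 1 = (Finset.range (t.height + 1)).card := (Finset.card_range _).symm
    _ ≤ (F.image t.heightAt).card := Finset.card_le_card hsup
    _ ≤ F.card := Finset.card_image_le
    _ = L.length := hcard
  refine ⟨part1, ?_, ?_⟩
  · -- length = height + 1 → SelfNested
    intro heq
    have himg : (F.image t.heightAt).card = F.card := by
      have h1 : (F.image t.heightAt).card ≤ t.height + 1 := by
        calc (F.image t.heightAt).card ≤ (Finset.range (t.height + 1)).card :=
          Finset.card_le_card hsub
        _ = t.height + 1 := Finset.card_range _
      have h2 : t.height + 1 ≤ (F.image t.heightAt).card := by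
        calc t.height + 1 = (Finset.range (t.height + 1)).card := (Finset.card_range _).symm
        _ ≤ _ := Finset.card_le_card hsup
      omega
    have hinj : Set.InjOn t.heightAt F := Finset.card_image_iff.mp himg
    intro v hv w hw hvw
    obtain ⟨x, hxL, hisovx⟩ := hcover v hv
    obtain ⟨y, hyL, hisowy⟩ := hcover w hw
    have hxs := hmem x hxL
    have hys := hmem y hyL
    have hxy : x = y := by
      apply hinj (List.mem_toFinset.mpr hxL) (List.mem_toFinset.mpr hyL)
      rw [← t.heightAt_eq_of_iso hv hxs hisovx, ← t.heightAt_eq_of_iso hw hys hisowy]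
      exact hvw
    subst hxy
    exact t.iso_trans hv hisovx (t.iso_symm hw hisowy)
  · -- SelfNested → length = height + 1
    intro hSN
    have hinj : Set.InjOn t.heightAt F := by
      intro a ha b hb hab
      by_contra hne
      have haL : a ∈ L := List.mem_toFinset.mp ha
      have hbL : b ∈ L := List.mem_toFinset.mp hb
      exact hforall a haL b hbL hne (hSN a (hmem a haL) b (hmem b hbL) hab)
    have h1 : F.card = (F.image t.heightAt).card := (Finset.card_image_of_injOn hinj).symm
    have h2 : (F.image t.heightAt).card ≤ t.height + 1 := by
      calc (F.image t.heightAt).card ≤ (Finset.range (t.height + 1)).card :=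
        Finset.card_le_card hsub
      _ = t.height + 1 := Finset.card_range _
    omega
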